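/- Let Γ be a finite connected cubic girth-regular graph of girth 3 with signature (a, b, c), a ≤ b ≤ c. Then either Γ is isomorphic to the complete graph K_4 (with signature (2, 2, 2)), or the signature of Γ is (0, 1, 1). -/

import Mathlib

open SimpleGraph

/-- `s` is the edge set of some cycle of length `g` in `G`. -/
def IsGirthCycleEdgeSet {V : Type*} (G : SimpleGraph V) (g : ℕ) (s : Set (Sym2 V)) : Prop :=
  ∃ (u : V) (w : G.Walk u u), w.IsCycle ∧ w.length = g ∧ s = {e | e ∈ w.edges}

/-- The number of cycles of length `g` in `G` that contain the edge `e`. -/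
noncomputable def girthCycleCount {V : Type*} (G : SimpleGraph V) (g : ℕ) (e : Sym2 V) : ℕ :=
  Set.ncard {s : Set (Sym2 V) | IsGirthCycleEdgeSet G g s ∧ e ∈ s}

/-- The multiset of the numbers of `g`-cycles through the edges incident to `v`. -/
noncomputable def vertexSignature {V : Type*} [Fintype V] (G : SimpleGraph V) (g : ℕ)
    (v : V) : Multiset ℕ :=
  ((G.neighborSet v).toFinite.toFinset.val).map fun u => girthCycleCount G g s(v, u)

section Aux

set_option linter.unusedSectionVars false

variable {V : Type*}

lemma walk_length3 {G : SimpleGraph V} {u : V} (w : G.Walk u u) (h : w.length = 3) :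
    ∃ (x y : V) (h1 : G.Adj u x) (h2 : G.Adj x y) (h3 : G.Adj y u),
      w = Walk.cons h1 (Walk.cons h2 (Walk.cons h3 Walk.nil)) := by
  cases w with
  | nil => simp at h
  | cons h1 w1 =>
    cases w1 with
    | nil => simp at h
    | cons h2 w2 =>
      cases w2 with
      | nil => simp at h
      | cons h3 w3 =>
        cases w3 with
        | nil => exact ⟨_, _, h1, h2, h3, rfl⟩
        | cons h4 w4 => simp [Walk.length_cons] at h

lemma triangle_isCycle {G : SimpleGraph V} {x y z : V} (hxy : G.Adj x y) (hyz : G.Adj y z)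
    (hzx : G.Adj z x) :
    (Walk.cons hxy (Walk.cons hyz (Walk.cons hzx Walk.nil))).IsCycle := by
  have h1 := hxy.ne
  have h2 := hyz.ne
  have h3 := hzx.ne
  simp [Walk.isCycle_def, Walk.isTrail_def, List.nodup_cons, Sym2.eq_iff]
  tauto

lemma triangle_girthCycle {G : SimpleGraph V} {x y z : V} (hxy : G.Adj x y) (hyz : G.Adj y z)
    (hzx : G.Adj z x) :
    IsGirthCycleEdgeSet G 3 ({s(x,y), s(y,z), s(z,x)} : Set (Sym2 V)) := by
  refine ⟨x, Walk.cons hxy (Walk.cons hyz (Walk.cons hzx Walk.nil)),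
    triangle_isCycle hxy hyz hzx, by simp, ?_⟩
  ext e
  simp [Walk.edges_cons]

lemma count_eq_common {G : SimpleGraph V} {u v : V} (huv : G.Adj u v) :
    girthCycleCount G 3 s(u,v) = (G.commonNeighbors u v).ncard := by
  have hset : {s : Set (Sym2 V) | IsGirthCycleEdgeSet G 3 s ∧ s(u,v) ∈ s}
      = (fun w => ({s(u,v), s(v,w), s(w,u)} : Set (Sym2 V))) '' (G.commonNeighbors u v) := by
    ext s
    constructor
    · rintro ⟨⟨x, w, hc, hl, rfl⟩, he⟩
      obtain ⟨p, q, h1, h2, h3, rfl⟩ := walk_length3 w hl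
      have hed : {e | e ∈ (Walk.cons h1 (Walk.cons h2 (Walk.cons h3 Walk.nil))).edges}
          = ({s(x,p), s(p,q), s(q,x)} : Set (Sym2 V)) := by
        ext e; simp [Walk.edges_cons]
      rw [hed] at he ⊢
      simp only [Set.mem_insert_iff, Set.mem_singleton_iff, Sym2.eq_iff] at he
      rcases he with (⟨rfl, rfl⟩ | ⟨rfl, rfl⟩) | (⟨rfl, rfl⟩ | ⟨rfl, rfl⟩) | (⟨rfl, rfl⟩ | ⟨rfl, rfl⟩)
      · exact ⟨q, (G.mem_commonNeighbors).mpr ⟨h3.symm, h2⟩, rfl⟩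
      · refine ⟨q, (G.mem_commonNeighbors).mpr ⟨h2, h3.symm⟩, ?_⟩
        ext e; simp only [Set.mem_insert_iff, Set.mem_singleton_iff]
        constructor <;> rintro (rfl|rfl|rfl) <;> simp [Sym2.eq_iff]
      · refine ⟨x, (G.mem_commonNeighbors).mpr ⟨h1.symm, h3⟩, ?_⟩
        ext e; simp only [Set.mem_insert_iff, Set.mem_singleton_iff]
        constructor <;> rintro (rfl|rfl|rfl) <;> simp [Sym2.eq_iff]
      · refine ⟨x, (G.mem_commonNeighbors).mpr ⟨h3, h1.symm⟩, ?_⟩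
        ext e; simp only [Set.mem_insert_iff, Set.mem_singleton_iff]
        constructor <;> rintro (rfl|rfl|rfl) <;> simp [Sym2.eq_iff]
      · refine ⟨p, (G.mem_commonNeighbors).mpr ⟨h2.symm, h1⟩, ?_⟩
        ext e; simp only [Set.mem_insert_iff, Set.mem_singleton_iff]
        constructor <;> rintro (rfl|rfl|rfl) <;> simp [Sym2.eq_iff]
      · refine ⟨p, (G.mem_commonNeighbors).mpr ⟨h1, h2.symm⟩, ?_⟩
        ext e; simp only [Set.mem_insert_iff, Set.mem_singleton_iff]
        constructor <;> rintro (rfl|rfl|rfl) <;> simp [Sym2.eq_iff]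
    · rintro ⟨w, hw, rfl⟩
      obtain ⟨hu, hv⟩ := (G.mem_commonNeighbors).mp hw
      exact ⟨triangle_girthCycle huv hv hu.symm, by simp⟩
  rw [girthCycleCount, hset, Set.ncard_image_of_injOn]
  intro w hw w' hw' h
  obtain ⟨hu, hv⟩ := (G.mem_commonNeighbors).mp hw
  obtain ⟨hu', hv'⟩ := (G.mem_commonNeighbors).mp hw'
  have h' : ({s(u,v), s(v,w), s(w,u)} : Set (Sym2 V)) = {s(u,v), s(v,w'), s(w',u)} := h
  have hm : s(v,w) ∈ ({s(u,v), s(v,w'), s(w',u)} : Set (Sym2 V)) := by rw [← h']; simp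
  simp only [Set.mem_insert_iff, Set.mem_singleton_iff, Sym2.eq_iff] at hm
  rcases hm with (⟨e1, e2⟩ | ⟨e1, e2⟩) | (⟨e1, e2⟩ | ⟨e1, e2⟩) | (⟨e1, e2⟩ | ⟨e1, e2⟩)
  · exact absurd e1 huv.ne'
  · exact absurd e2 hu.ne'
  · exact e2
  · exact absurd e1 hv'.ne
  · exact absurd e1 hv'.ne
  · exact absurd e1 huv.ne'

variable [Fintype V] [DecidableEq V]

lemma nbhd_two {G : SimpleGraph V} [DecidableRel G.Adj] (hreg : G.IsRegularOfDegree 3)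
    {u y z : V} (hy : G.Adj u y) (hz : G.Adj u z) (hyz : y ≠ z) :
    ∃ w, w ≠ y ∧ w ≠ z ∧ G.neighborFinset u = {y, z, w} := by
  have hcard : (G.neighborFinset u).card = 3 := hreg u
  obtain ⟨p, q, r, hpq, hpr, hqr, hs⟩ := Finset.card_eq_three.mp hcard
  have hym : y ∈ ({p, q, r} : Finset V) := by rw [← hs]; simpa using hy
  have hzm : z ∈ ({p, q, r} : Finset V) := by rw [← hs]; simpa using hz
  simp only [Finset.mem_insert, Finset.mem_singleton] at hym hzm
  rcases hym with rfl | rfl | rfl <;> rcases hzm with rfl | rfl | rfl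
  · exact absurd rfl hyz
  · exact ⟨r, hpr.symm, hqr.symm, hs⟩
  · exact ⟨q, hpq.symm, hqr, by rw [hs]; ext t; simp; tauto⟩
  · exact ⟨r, hqr.symm, hpr.symm, by rw [hs]; ext t; simp; tauto⟩
  · exact absurd rfl hyz
  · exact ⟨p, hpq, hpr, by rw [hs]; ext t; simp; tauto⟩
  · exact ⟨q, hqr, hpq.symm, by rw [hs]; ext t; simp; tauto⟩
  · exact ⟨p, hpr, hpq, by rw [hs]; ext t; simp; tauto⟩
  · exact absurd rfl hyz

lemma nbhd_one {G : SimpleGraph V} [DecidableRel G.Adj] (hreg : G.IsRegularOfDegree 3)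
    {u v : V} (hv : G.Adj u v) :
    ∃ x y, x ≠ y ∧ v ≠ x ∧ v ≠ y ∧ G.neighborFinset u = {v, x, y} := by
  have hcard : (G.neighborFinset u).card = 3 := hreg u
  obtain ⟨p, q, r, hpq, hpr, hqr, hs⟩ := Finset.card_eq_three.mp hcard
  have hvm : v ∈ ({p, q, r} : Finset V) := by rw [← hs]; simpa using hv
  simp only [Finset.mem_insert, Finset.mem_singleton] at hvm
  rcases hvm with rfl | rfl | rfl
  · exact ⟨q, r, hqr, hpq, hpr, by rw [hs]⟩
  · exact ⟨p, r, hpr, hpq.symm, hqr, by rw [hs]; ext t; simp; tauto⟩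
  · exact ⟨p, q, hpq, hpr.symm, hqr.symm, by rw [hs]; ext t; simp; tauto⟩

lemma nbhd_eq {G : SimpleGraph V} [DecidableRel G.Adj] (hreg : G.IsRegularOfDegree 3)
    {p q r s : V} (h1 : G.Adj p q) (h2 : G.Adj p r) (h3 : G.Adj p s)
    (d1 : q ≠ r) (d2 : q ≠ s) (d3 : r ≠ s) :
    G.neighborFinset p = {q, r, s} := by
  have hsub : ({q, r, s} : Finset V) ⊆ G.neighborFinset p := by
    intro t ht
    simp only [Finset.mem_insert, Finset.mem_singleton] at ht
    rcases ht with rfl | rfl | rfl <;> simp [mem_neighborFinset, h1, h2, h3]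
  have hcard : (G.neighborFinset p).card ≤ ({q, r, s} : Finset V).card := by
    have hc1 : (G.neighborFinset p).card = 3 := hreg p
    have hc2 : ({q, r, s} : Finset V).card = 3 := by
      rw [Finset.card_insert_of_notMem (by simp [d1, d2]),
        Finset.card_insert_of_notMem (by simp [d3]), Finset.card_singleton]
    omega
  exact (Finset.eq_of_subset_of_card_le hsub hcard).symm

lemma vsig_eq {G : SimpleGraph V} [DecidableRel G.Adj] {u p q r : V}
    (hpq : p ≠ q) (hpr : p ≠ r) (hqr : q ≠ r)
    (hn : G.neighborFinset u = {p, q, r}) :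
    vertexSignature G 3 u
      = {girthCycleCount G 3 s(u,p), girthCycleCount G 3 s(u,q), girthCycleCount G 3 s(u,r)} := by
  have h1 : (G.neighborSet u).toFinite.toFinset = G.neighborFinset u := by
    ext t; simp
  rw [vertexSignature, h1, hn]
  have hv : ({p, q, r} : Finset V).val = (p ::ₘ q ::ₘ {r}) := by
    rw [Finset.insert_val_of_notMem (by simp [hpq, hpr]),
        Finset.insert_val_of_notMem (by simp [hqr])]
    rfl
  rw [hv]
  simp

lemma ms_sorted {a b c p q r : ℕ} (hab : a ≤ b) (hbc : b ≤ c) (hpq : p ≤ q) (hqr : q ≤ r)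
    (h : ({a, b, c} : Multiset ℕ) = {p, q, r}) : a = p ∧ b = q ∧ c = r := by
  have ha : a = p ∨ a = q ∨ a = r := by
    have : a ∈ ({p, q, r} : Multiset ℕ) := by rw [← h]; simp
    simpa using this
  have hb : b = p ∨ b = q ∨ b = r := by
    have : b ∈ ({p, q, r} : Multiset ℕ) := by rw [← h]; simp
    simpa using this
  have hc : c = p ∨ c = q ∨ c = r := by
    have : c ∈ ({p, q, r} : Multiset ℕ) := by rw [← h]; simp
    simpa using this
  have hp : p = a ∨ p = b ∨ p = c := by
    have : p ∈ ({a, b, c} : Multiset ℕ) := by rw [h]; simp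
    simpa using this
  have hq : q = a ∨ q = b ∨ q = c := by
    have : q ∈ ({a, b, c} : Multiset ℕ) := by rw [h]; simp
    simpa using this
  have hr : r = a ∨ r = b ∨ r = c := by
    have : r ∈ ({a, b, c} : Multiset ℕ) := by rw [h]; simp
    simpa using this
  have hcnt := congrArg (Multiset.count b) h
  simp only [Multiset.count_cons, Multiset.count_singleton, Multiset.insert_eq_cons] at hcnt
  split_ifs at hcnt <;> omega

lemma common_le_two {G : SimpleGraph V} [DecidableRel G.Adj] (hreg : G.IsRegularOfDegree 3)
    {u v : V} (huv : G.Adj u v) : (G.commonNeighbors u v).ncard ≤ 2 := by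
  have hsub : G.commonNeighbors u v ⊆ G.neighborSet u \ {v} := by
    intro w hw
    obtain ⟨h1, h2⟩ := (G.mem_commonNeighbors).mp hw
    exact ⟨h1, by rintro rfl; exact h2.ne rfl⟩
  have hcard : (G.neighborSet u \ {v}).ncard = 2 := by
    have hd : (G.neighborSet u \ {v}).ncard = (G.neighborSet u).ncard - 1 :=
      Set.ncard_diff_singleton_of_mem huv
    have h3 : (G.neighborSet u).ncard = 3 := by
      have hfe : (G.neighborSet u).toFinset = G.neighborFinset u := by ext t; simp
      rw [Set.ncard_eq_toFinset_card', hfe]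
      exact hreg u
    omega
  calc (G.commonNeighbors u v).ncard ≤ (G.neighborSet u \ {v}).ncard :=
        Set.ncard_le_ncard hsub (Set.toFinite _)
    _ = 2 := hcard

lemma k4_iso {G : SimpleGraph V} [DecidableRel G.Adj] (hconn : G.Connected)
    (hreg : G.IsRegularOfDegree 3) {u v x y : V}
    (huv : G.Adj u v) (hux : G.Adj u x) (huy : G.Adj u y)
    (hvx : G.Adj v x) (hvy : G.Adj v y) (hxy : G.Adj x y) :
    Nonempty (G ≃g (⊤ : SimpleGraph (Fin 4))) := by
  have nuv := huv.ne; have nux := hux.ne; have nuy := huy.ne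
  have nvx := hvx.ne; have nvy := hvy.ne; have nxy := hxy.ne
  have hnu : G.neighborFinset u = {v, x, y} := nbhd_eq hreg huv hux huy nvx nvy nxy
  have hnv : G.neighborFinset v = {u, x, y} := nbhd_eq hreg huv.symm hvx hvy nux nuy nxy
  have hnx : G.neighborFinset x = {u, v, y} := nbhd_eq hreg hux.symm hvx.symm hxy nuv nuy nvy
  have hny : G.neighborFinset y = {u, v, x} := nbhd_eq hreg huy.symm hvy.symm hxy.symm nuv nux nvx
  set S : Set V := {u, v, x, y} with hS
  have hstep : ∀ p q : V, p ∈ S → G.Adj p q → q ∈ S := by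
    intro p q hp hadj
    have hq : q ∈ G.neighborFinset p := by simpa [mem_neighborFinset] using hadj
    rcases hp with rfl | rfl | rfl | rfl
    · rw [hnu] at hq; simp only [Finset.mem_insert, Finset.mem_singleton] at hq
      rcases hq with rfl | rfl | rfl <;> simp [hS]
    · rw [hnv] at hq; simp only [Finset.mem_insert, Finset.mem_singleton] at hq
      rcases hq with rfl | rfl | rfl <;> simp [hS]
    · rw [hnx] at hq; simp only [Finset.mem_insert, Finset.mem_singleton] at hq
      rcases hq with rfl | rfl | rfl <;> simp [hS]
    · rw [hny] at hq; simp only [Finset.mem_insert, Finset.mem_singleton] at hq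
      rcases hq with rfl | rfl | rfl <;> simp [hS]
  have hall : ∀ t : V, t ∈ S := by
    intro t
    obtain ⟨p⟩ := hconn.preconnected u t
    have key : ∀ {s t : V}, G.Walk s t → s ∈ S → t ∈ S := by
      intro s t w
      induction w with
      | nil => exact id
      | cons h w ih => exact fun hs => ih (hstep _ _ hs h)
    exact key p (by simp [hS])
  set e : Fin 4 → V := ![u, v, x, y] with he
  have hinj : Function.Injective e := by
    intro i j hij
    fin_cases i <;> fin_cases j <;> simp_all [he] <;>
      first
      | rfl
      | exact absurd hij nuv | exact absurd hij nux | exact absurd hij nuy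
      | exact absurd hij nvx | exact absurd hij nvy | exact absurd hij nxy
      | exact absurd hij.symm nuv | exact absurd hij.symm nux | exact absurd hij.symm nuy
      | exact absurd hij.symm nvx | exact absurd hij.symm nvy | exact absurd hij.symm nxy
  have hsurj : Function.Surjective e := by
    intro t
    rcases hall t with rfl | rfl | rfl | rfl
    · exact ⟨0, rfl⟩
    · exact ⟨1, rfl⟩
    · exact ⟨2, rfl⟩
    · exact ⟨3, rfl⟩
  have hadj : ∀ i j : Fin 4, i ≠ j → G.Adj (e i) (e j) := by
    intro i j hij
    fin_cases i <;> fin_cases j <;>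
      first
      | exact absurd rfl hij
      | exact huv | exact hux | exact huy | exact hvx | exact hvy | exact hxy
      | exact huv.symm | exact hux.symm | exact huy.symm
      | exact hvx.symm | exact hvy.symm | exact hxy.symm
  refine ⟨(⟨Equiv.ofBijective e ⟨hinj, hsurj⟩, ?_⟩ : (⊤ : SimpleGraph (Fin 4)) ≃g G).symm⟩
  intro i j
  simp only [Equiv.ofBijective_apply, top_adj]
  constructor
  · exact fun h => fun hij => h.ne (by rw [hij])
  · exact hadj i j

end Aux

/-- A finite connected cubic girth-regular graph of girth `3` with
signature `(a, b, c)` is either isomorphic to `K₄` with signature `(2, 2, 2)`, or has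
signature `(0, 1, 1)`. -/
theorem stmt16 {V : Type*} [Fintype V] (G : SimpleGraph V) [DecidableRel G.Adj]
    (hconn : G.Connected)
    (hreg : G.IsRegularOfDegree 3) (hg : G.egirth = (3 : ℕ∞))
    (a b c : ℕ) (hab : a ≤ b) (hbc : b ≤ c)
    (hsig : ∀ v : V, vertexSignature G 3 v = {a, b, c}) :
    (Nonempty (G ≃g (⊤ : SimpleGraph (Fin 4))) ∧ a = 2 ∧ b = 2 ∧ c = 2) ∨
      (a = 0 ∧ b = 1 ∧ c = 1) := by
  classical
  have hna : ¬ G.IsAcyclic := by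
    rw [← egirth_eq_top]; simp [hg]
  obtain ⟨v0, w0, hc0, hl0⟩ := exists_egirth_eq_length.mpr hna
  rw [hg] at hl0
  have hl3 : w0.length = 3 := by exact_mod_cast hl0.symm
  obtain ⟨t1, t2, e1, e2, e3, -⟩ := walk_length3 w0 hl3
  by_cases hK : ∃ p q : V, G.Adj p q ∧ (G.commonNeighbors p q).ncard = 2
  · -- some edge lies on two triangles: the graph is K₄
    obtain ⟨u, v, huv, h2⟩ := hK
    obtain ⟨x, y, hxy, hvx, hvy, hn⟩ := nbhd_one hreg huv
    have hux : G.Adj u x := by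
      have : x ∈ G.neighborFinset u := by rw [hn]; simp
      simpa [mem_neighborFinset] using this
    have huy : G.Adj u y := by
      have : y ∈ G.neighborFinset u := by rw [hn]; simp
      simpa [mem_neighborFinset] using this
    have hcs : G.commonNeighbors u v = {x, y} := by
      apply Set.eq_of_subset_of_ncard_le
      · intro w hw
        obtain ⟨hw1, hw2⟩ := (G.mem_commonNeighbors).mp hw
        have hwm : w ∈ G.neighborFinset u := by simpa [mem_neighborFinset] using hw1
        rw [hn] at hwm; simp only [Finset.mem_insert, Finset.mem_singleton] at hwm
        rcases hwm with rfl | rfl | rfl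
        · exact absurd rfl hw2.ne
        · simp
        · simp
      · rw [h2, Set.ncard_pair hxy]
      · exact Set.toFinite _
    have hvx' : G.Adj v x := by
      have hx : x ∈ G.commonNeighbors u v := by rw [hcs]; simp
      exact ((G.mem_commonNeighbors).mp hx).2
    have hvy' : G.Adj v y := by
      have hy : y ∈ G.commonNeighbors u v := by rw [hcs]; simp
      exact ((G.mem_commonNeighbors).mp hy).2
    by_cases hxya : G.Adj x y
    · -- K₄ case
      left
      refine ⟨k4_iso hconn hreg huv hux huy hvx' hvy' hxya, ?_⟩
      have c1 : (G.commonNeighbors u x).ncard = 2 := by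
        have hle := common_le_two hreg hux
        have hsub : ({v, y} : Set V) ⊆ G.commonNeighbors u x := by
          rintro w (rfl | rfl)
          · exact (G.mem_commonNeighbors).mpr ⟨huv, hvx'.symm⟩
          · exact (G.mem_commonNeighbors).mpr ⟨huy, hxya⟩
        have hge := Set.ncard_le_ncard hsub (Set.toFinite _)
        rw [Set.ncard_pair hvy] at hge
        omega
      have c2 : (G.commonNeighbors u y).ncard = 2 := by
        have hle := common_le_two hreg huy
        have hsub : ({v, x} : Set V) ⊆ G.commonNeighbors u y := by
          rintro w (rfl | rfl)
          · exact (G.mem_commonNeighbors).mpr ⟨huv, hvy'.symm⟩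
          · exact (G.mem_commonNeighbors).mpr ⟨hux, hxya.symm⟩
        have hge := Set.ncard_le_ncard hsub (Set.toFinite _)
        rw [Set.ncard_pair hvx] at hge
        omega
      have hv1 : vertexSignature G 3 u = {2, 2, 2} := by
        rw [vsig_eq hvx hvy hxy hn, count_eq_common huv, count_eq_common hux,
          count_eq_common huy, h2, c1, c2]
      exact ms_sorted hab hbc (le_refl 2) (le_refl 2) ((hsig u).symm.trans hv1)
    · -- would give signature (1,1,2): impossible
      exfalso
      have hcx : G.commonNeighbors u x = {v} := by
        ext w
        constructor
        · intro hw
          obtain ⟨hw1, hw2⟩ := (G.mem_commonNeighbors).mp hw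
          have hwm : w ∈ G.neighborFinset u := by simpa [mem_neighborFinset] using hw1
          rw [hn] at hwm; simp only [Finset.mem_insert, Finset.mem_singleton] at hwm
          rcases hwm with rfl | rfl | rfl
          · simp
          · exact absurd rfl hw2.ne
          · exact absurd hw2 hxya
        · rintro rfl
          exact (G.mem_commonNeighbors).mpr ⟨huv, hvx'.symm⟩
      have hcy : G.commonNeighbors u y = {v} := by
        ext w
        constructor
        · intro hw
          obtain ⟨hw1, hw2⟩ := (G.mem_commonNeighbors).mp hw
          have hwm : w ∈ G.neighborFinset u := by simpa [mem_neighborFinset] using hw1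
          rw [hn] at hwm; simp only [Finset.mem_insert, Finset.mem_singleton] at hwm
          rcases hwm with rfl | rfl | rfl
          · simp
          · exact absurd hw2.symm hxya
          · exact absurd rfl hw2.ne
        · rintro rfl
          exact (G.mem_commonNeighbors).mpr ⟨huv, hvy'.symm⟩
      have hv1 : vertexSignature G 3 u = {2, 1, 1} := by
        rw [vsig_eq hvx hvy hxy hn, count_eq_common huv, count_eq_common hux,
          count_eq_common huy, h2, hcx, hcy, Set.ncard_singleton]
      have hperm : ({2, 1, 1} : Multiset ℕ) = {1, 1, 2} := by decide
      obtain ⟨ra, rb, rc⟩ := ms_sorted hab hbc (le_refl 1) (by norm_num)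
        (((hsig u).symm.trans hv1).trans hperm)
      -- analyze vertex x
      obtain ⟨z, hzu, hzv, hnx⟩ := nbhd_two hreg hux.symm hvx'.symm huv.ne
      have hxz : G.Adj x z := by
        have : z ∈ G.neighborFinset x := by rw [hnx]; simp
        simpa [mem_neighborFinset] using this
      have hnv : G.neighborFinset v = {u, x, y} :=
        nbhd_eq hreg huv.symm hvx' hvy' hux.ne huy.ne hxy
      have hcxu : (G.commonNeighbors x u).ncard = 1 := by
        rw [G.commonNeighbors_symm x u, hcx, Set.ncard_singleton]
      have hcxv : G.commonNeighbors x v = {u} := by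
        ext w
        constructor
        · intro hw
          obtain ⟨hw1, hw2⟩ := (G.mem_commonNeighbors).mp hw
          have hwm : w ∈ G.neighborFinset x := by simpa [mem_neighborFinset] using hw1
          rw [hnx] at hwm; simp only [Finset.mem_insert, Finset.mem_singleton] at hwm
          rcases hwm with rfl | rfl | rfl
          · simp
          · exact absurd rfl hw2.ne
          · -- w = z adjacent to v : impossible
            exfalso
            have hwm2 : w ∈ G.neighborFinset v := by simpa [mem_neighborFinset] using hw2
            rw [hnv] at hwm2; simp only [Finset.mem_insert, Finset.mem_singleton] at hwm2
            rcases hwm2 with rfl | rfl | rfl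
            · exact hzu rfl
            · exact hxz.ne rfl
            · exact hxya hxz
        · rintro rfl
          exact (G.mem_commonNeighbors).mpr ⟨hux.symm, huv.symm⟩
      have hxsig : vertexSignature G 3 x
          = {1, 1, (G.commonNeighbors x z).ncard} := by
        rw [vsig_eq huv.ne hzu.symm hzv.symm hnx, count_eq_common hux.symm,
          count_eq_common hvx'.symm, count_eq_common hxz, hcxv, Set.ncard_singleton]
        rw [show (G.commonNeighbors x u).ncard = 1 from hcxu]
      have h12 : vertexSignature G 3 x = {1, 1, 2} := by
        rw [hsig x, ra, rb, rc]
      have heq : ({1, 1, (G.commonNeighbors x z).ncard} : Multiset ℕ) = {1, 1, 2} :=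
        hxsig.symm.trans h12
      simp only [Multiset.insert_eq_cons] at heq
      have hxz2 : (G.commonNeighbors x z).ncard = 2 :=
        Multiset.singleton_inj.mp ((Multiset.cons_inj_right _).mp
          ((Multiset.cons_inj_right _).mp heq))
      -- common neighbors of x and z must be {u, v}, but z is not adjacent to u
      have hcsz : G.commonNeighbors x z = {u, v} := by
        apply Set.eq_of_subset_of_ncard_le
        · intro w hw
          obtain ⟨hw1, hw2⟩ := (G.mem_commonNeighbors).mp hw
          have hwm : w ∈ G.neighborFinset x := by simpa [mem_neighborFinset] using hw1
          rw [hnx] at hwm; simp only [Finset.mem_insert, Finset.mem_singleton] at hwm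
          rcases hwm with rfl | rfl | rfl
          · simp
          · simp
          · exact absurd rfl hw2.ne
        · rw [hxz2, Set.ncard_pair huv.ne]
        · exact Set.toFinite _
      have hu_mem : u ∈ G.commonNeighbors x z := by rw [hcsz]; simp
      have hzu' : G.Adj z u := ((G.mem_commonNeighbors).mp hu_mem).2
      have hz_mem : z ∈ G.neighborFinset u := by simpa [mem_neighborFinset] using hzu'.symm
      rw [hn] at hz_mem; simp only [Finset.mem_insert, Finset.mem_singleton] at hz_mem
      rcases hz_mem with rfl | rfl | rfl
      · exact hzv rfl
      · exact hxz.ne rfl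
      · exact hxya hxz
  · -- no edge lies on two triangles: signature is (0,1,1)
    right
    have hle1 : ∀ p q : V, G.Adj p q → (G.commonNeighbors p q).ncard ≤ 1 := by
      intro p q h
      have hle := common_le_two hreg h
      have hne : (G.commonNeighbors p q).ncard ≠ 2 := fun hc => hK ⟨p, q, h, hc⟩
      omega
    obtain ⟨w, hw1, hw2, hn0⟩ := nbhd_two hreg e1 e3.symm e2.ne
    have hvw : G.Adj v0 w := by
      have : w ∈ G.neighborFinset v0 := by rw [hn0]; simp
      simpa [mem_neighborFinset] using this
    have c1 : (G.commonNeighbors v0 t1).ncard = 1 := by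
      have hmem : t2 ∈ G.commonNeighbors v0 t1 :=
        (G.mem_commonNeighbors).mpr ⟨e3.symm, e2⟩
      have hpos := (Set.ncard_pos (Set.toFinite _)).mpr ⟨t2, hmem⟩
      have := hle1 v0 t1 e1
      omega
    have c2 : (G.commonNeighbors v0 t2).ncard = 1 := by
      have hmem : t1 ∈ G.commonNeighbors v0 t2 :=
        (G.mem_commonNeighbors).mpr ⟨e1, e2.symm⟩
      have hpos := (Set.ncard_pos (Set.toFinite _)).mpr ⟨t1, hmem⟩
      have := hle1 v0 t2 e3.symm
      omega
    have c3 : (G.commonNeighbors v0 w).ncard = 0 := by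
      rcases Set.eq_empty_or_nonempty (G.commonNeighbors v0 w) with hemp | ⟨p, hp⟩
      · rw [hemp]; exact Set.ncard_empty _
      · exfalso
        obtain ⟨hp1, hp2⟩ := (G.mem_commonNeighbors).mp hp
        have hpm : p ∈ G.neighborFinset v0 := by simpa [mem_neighborFinset] using hp1
        rw [hn0] at hpm; simp only [Finset.mem_insert, Finset.mem_singleton] at hpm
        rcases hpm with rfl | rfl | rfl
        · have hsub : ({t2, w} : Set V) ⊆ G.commonNeighbors v0 p := by
            rintro q (rfl | rfl)
            · exact (G.mem_commonNeighbors).mpr ⟨e3.symm, e2⟩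
            · exact (G.mem_commonNeighbors).mpr ⟨hvw, hp2.symm⟩
          have hge := Set.ncard_le_ncard hsub (Set.toFinite _)
          rw [Set.ncard_pair (fun h => hw2 h.symm)] at hge
          have := hle1 v0 p e1
          omega
        · have hsub : ({t1, w} : Set V) ⊆ G.commonNeighbors v0 p := by
            rintro q (rfl | rfl)
            · exact (G.mem_commonNeighbors).mpr ⟨e1, e2.symm⟩
            · exact (G.mem_commonNeighbors).mpr ⟨hvw, hp2.symm⟩
          have hge := Set.ncard_le_ncard hsub (Set.toFinite _)
          rw [Set.ncard_pair (fun h => hw1 h.symm)] at hge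
          have := hle1 v0 p e3.symm
          omega
        · exact G.loopless.irrefl _ hp2
    have hv1 : vertexSignature G 3 v0 = {1, 1, 0} := by
      rw [vsig_eq e2.ne hw1.symm hw2.symm hn0, count_eq_common e1,
        count_eq_common e3.symm, count_eq_common hvw, c1, c2, c3]
    have hperm : ({1, 1, 0} : Multiset ℕ) = {0, 1, 1} := by decide
    exact ms_sorted hab hbc (by norm_num) (le_refl 1)
      (((hsig v0).symm.trans hv1).trans hperm)
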